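/- Let n ≥ 1, let ξ : ℕ^n → ℂ be a family of complex numbers and v ∈ ℂ^n. Then Σ_{α∈ℕ^n} |Σ_{j : α_j ≥ 1} √(α_j) · ξ_{α−c_j} · v_j|² ≤ (Σ_{ℓ=1}^n |v_ℓ|²) · Σ_{α∈ℕ^n} (|α|+n) |ξ_α|², where c_j is the j-th standard basis multi-index (both sides possibly infinite). -/

import Mathlib

open Finset ENNReal
open scoped NNReal

/-- **Cauchy–Schwarz estimate for the model curvature form.**
Let `n ≥ 1`, `ξ : ℕⁿ → ℂ` and `v ∈ ℂⁿ`. Then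
`Σ_α |Σ_{j : α_j ≥ 1} √(α_j) ξ_{α-c_j} v_j|² ≤ (Σ_ℓ |v_ℓ|²) · Σ_α (|α|+n)|ξ_α|²`,
both sides being possibly infinite. -/
theorem curvature_cauchy_schwarz (n : ℕ) (hn : 1 ≤ n) (ξ : (Fin n → ℕ) → ℂ) (v : Fin n → ℂ) :
    (∑' α : Fin n → ℕ,
        (‖∑ j ∈ Finset.univ.filter (fun j : Fin n => 1 ≤ α j),
            (Real.sqrt (α j) : ℂ) * ξ (fun i => α i - if i = j then 1 else 0) * v j‖₊ :
          ℝ≥0∞) ^ 2) ≤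
      (∑ ℓ : Fin n, (‖v ℓ‖₊ : ℝ≥0∞) ^ 2) *
        ∑' α : Fin n → ℕ, (((∑ j, α j) + n : ℕ) : ℝ≥0∞) * (‖ξ α‖₊ : ℝ≥0∞) ^ 2 := by
  classical
  set C : ℝ≥0∞ := ∑ ℓ : Fin n, (‖v ℓ‖₊ : ℝ≥0∞) ^ 2 with hC
  -- pointwise Cauchy–Schwarz bound
  have key : ∀ α : Fin n → ℕ,
      ((‖∑ j ∈ Finset.univ.filter (fun j : Fin n => 1 ≤ α j),
          (Real.sqrt (α j) : ℂ) * ξ (fun i => α i - if i = j then 1 else 0) * v j‖₊ : ℝ≥0∞) ^ 2)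
        ≤ C * ∑ j : Fin n,
            (α j : ℝ≥0∞) * (‖ξ (fun i => α i - if i = j then 1 else 0)‖₊ : ℝ≥0∞) ^ 2 := by
    intro α
    set s := Finset.univ.filter (fun j : Fin n => 1 ≤ α j) with hs
    set F : Fin n → ℂ := fun j => ξ (fun i => α i - if i = j then 1 else 0) with hF
    have h1 : ‖∑ j ∈ s, (Real.sqrt (α j) : ℂ) * F j * v j‖₊
        ≤ ∑ j ∈ s, ((Real.sqrt (α j)).toNNReal * ‖F j‖₊) * ‖v j‖₊ := by
      refine (nnnorm_sum_le _ _).trans (le_of_eq (Finset.sum_congr rfl fun j _ => ?_))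
      rw [nnnorm_mul, nnnorm_mul]
      congr 1
      congr 1
      rw [Complex.nnnorm_real]
      ext
      simp [Real.nnnorm_of_nonneg (Real.sqrt_nonneg _), Real.coe_toNNReal _ (Real.sqrt_nonneg _)]
    have h2 : (∑ j ∈ s, ((Real.sqrt (α j)).toNNReal * ‖F j‖₊) * ‖v j‖₊) ^ 2
        ≤ (∑ j ∈ s, ((Real.sqrt (α j)).toNNReal * ‖F j‖₊) ^ 2) * (∑ j ∈ s, ‖v j‖₊ ^ 2) :=
      Finset.sum_mul_sq_le_sq_mul_sq s _ _
    have hsq : ∀ j : Fin n, ((Real.sqrt (α j)).toNNReal * ‖F j‖₊) ^ 2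
        = (α j : ℝ≥0) * ‖F j‖₊ ^ 2 := by
      intro j
      rw [mul_pow]
      congr 1
      ext
      push_cast
      rw [Real.coe_toNNReal _ (Real.sqrt_nonneg _), Real.sq_sqrt (by positivity)]
    have h3 : (∑ j ∈ s, ((Real.sqrt (α j)).toNNReal * ‖F j‖₊) ^ 2)
        ≤ ∑ j : Fin n, (α j : ℝ≥0) * ‖F j‖₊ ^ 2 := by
      rw [Finset.sum_congr rfl fun j _ => hsq j]
      exact Finset.sum_le_sum_of_subset (Finset.subset_univ s)
    have h4 : (∑ j ∈ s, ‖v j‖₊ ^ 2) ≤ ∑ j : Fin n, ‖v j‖₊ ^ 2 :=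
      Finset.sum_le_sum_of_subset (Finset.subset_univ s)
    have hN : ‖∑ j ∈ s, (Real.sqrt (α j) : ℂ) * F j * v j‖₊ ^ 2
        ≤ (∑ j : Fin n, ‖v j‖₊ ^ 2) * ∑ j : Fin n, (α j : ℝ≥0) * ‖F j‖₊ ^ 2 := by
      calc ‖∑ j ∈ s, (Real.sqrt (α j) : ℂ) * F j * v j‖₊ ^ 2
          ≤ (∑ j ∈ s, ((Real.sqrt (α j)).toNNReal * ‖F j‖₊) * ‖v j‖₊) ^ 2 := by
            exact pow_le_pow_left₀ zero_le h1 2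
        _ ≤ (∑ j ∈ s, ((Real.sqrt (α j)).toNNReal * ‖F j‖₊) ^ 2) * (∑ j ∈ s, ‖v j‖₊ ^ 2) := h2
        _ ≤ (∑ j : Fin n, (α j : ℝ≥0) * ‖F j‖₊ ^ 2) * ∑ j : Fin n, ‖v j‖₊ ^ 2 :=
            mul_le_mul' h3 h4
        _ = _ := mul_comm _ _
    -- coerce to ℝ≥0∞
    calc ((‖∑ j ∈ s, (Real.sqrt (α j) : ℂ) * F j * v j‖₊ : ℝ≥0∞) ^ 2)
        ≤ (((∑ j : Fin n, ‖v j‖₊ ^ 2) * ∑ j : Fin n, (α j : ℝ≥0) * ‖F j‖₊ ^ 2 : ℝ≥0) : ℝ≥0∞) := by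
          rw [← ENNReal.coe_pow]
          exact ENNReal.coe_le_coe.2 hN
      _ = C * ∑ j : Fin n, (α j : ℝ≥0∞) * (‖F j‖₊ : ℝ≥0∞) ^ 2 := by
          push_cast
          rfl
  refine le_trans (ENNReal.tsum_le_tsum key) ?_
  rw [ENNReal.tsum_mul_left]
  refine mul_le_mul_right (le_of_eq ?_) C
  rw [Summable.tsum_finsetSum (fun i _ => ENNReal.summable)]
  -- reindex each inner tsum
  have hre : ∀ j : Fin n,
      (∑' α : Fin n → ℕ, (α j : ℝ≥0∞) * (‖ξ (fun i => α i - if i = j then 1 else 0)‖₊ : ℝ≥0∞) ^ 2)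
        = ∑' β : Fin n → ℕ, ((β j : ℝ≥0∞) + 1) * (‖ξ β‖₊ : ℝ≥0∞) ^ 2 := by
    intro j
    set e : (Fin n → ℕ) → (Fin n → ℕ) := fun β i => β i + if i = j then 1 else 0 with he
    have hinj : Function.Injective e := by
      intro β β' h
      funext i
      have := congrFun h i
      simp only [e] at this
      omega
    have hsupp : Function.support
        (fun α : Fin n → ℕ => (α j : ℝ≥0∞) * (‖ξ (fun i => α i - if i = j then 1 else 0)‖₊ : ℝ≥0∞) ^ 2)
        ⊆ Set.range e := by
      intro α hα
      have hj : 1 ≤ α j := by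
        by_contra h
        apply hα
        simp only [not_le] at h
        interval_cases h' : α j <;> simp_all
      refine ⟨fun i => α i - if i = j then 1 else 0, ?_⟩
      funext i
      simp only [e]
      by_cases hij : i = j <;> simp [hij] <;> omega
    have := hinj.tsum_eq hsupp
    rw [← this]
    refine tsum_congr fun β => ?_
    have h1 : e β j = β j + 1 := by simp [e]
    have h2 : (fun i => e β i - if i = j then 1 else 0) = β := by
      funext i
      by_cases hij : i = j <;> simp [e, hij]
    rw [h1, h2]
    push_cast
    ring
  rw [Finset.sum_congr rfl fun j _ => hre j]
  rw [← Summable.tsum_finsetSum (fun i _ => ENNReal.summable)]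
  refine tsum_congr fun β => ?_
  rw [← Finset.sum_mul]
  congr 1
  push_cast
  rw [Finset.sum_add_distrib]
  simp [Finset.card_univ]
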